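/- Let 0 < q < 1 and suppose v satisfies v(x) ≥ G[v^q dμ](x) + G[ν](x) + h(x) on Ω (with v > 0), the lower bound v ≥ u_0 := (1−q)^{1/(1−q)} G[μ]^{1/(1−q)} holds, and define u_j = G[u_{j−1}^q dμ] + G[ν] + h. Then u_j ≤ v on Ω for every j, hence the limit solution u = lim u_j is minimal among solutions dominating u_0. -/

import Mathlib

open MeasureTheory
open scoped ENNReal

/-- Minimality of the successively approximated solution: if `v > 0` satisfies
`v ≥ G[v^q dμ] + G[ν] + h` and `v ≥ u_0 = (1−q)^{1/(1−q)} G[μ]^{1/(1−q)}`, then each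
iterate `u_j` (with `u_j = G[u_{j−1}^q dμ] + G[ν] + h`) satisfies `u_j ≤ v`, and hence
the limit `u = lim u_j = ⨆_j u_j` satisfies `u ≤ v`. -/
theorem successive_approximation_minimal {Ω : Type*} [MeasurableSpace Ω]
    (G : Ω → Ω → ℝ≥0∞) (μ ν : Measure Ω)
    (q : ℝ) (hq0 : 0 < q) (hq1 : q < 1)
    (h : Ω → ℝ≥0∞) (u : ℕ → Ω → ℝ≥0∞) (v : Ω → ℝ≥0∞)
    (hvpos : ∀ x, 0 < v x)
    (hvsuper : ∀ x, (∫⁻ y, G x y * (v y) ^ q ∂μ) + (∫⁻ y, G x y ∂ν) + h x ≤ v x)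
    (hvlow : ∀ x, ENNReal.ofReal ((1 - q) ^ (1 / (1 - q))) * (∫⁻ y, G x y ∂μ) ^ (1 / (1 - q))
      ≤ v x)
    (hu0 : ∀ x, u 0 x
      = ENNReal.ofReal ((1 - q) ^ (1 / (1 - q))) * (∫⁻ y, G x y ∂μ) ^ (1 / (1 - q)))
    (huj : ∀ j x, u (j + 1) x
      = (∫⁻ y, G x y * (u j y) ^ q ∂μ) + (∫⁻ y, G x y ∂ν) + h x) :
    (∀ j x, u j x ≤ v x) ∧ ∀ x, (⨆ j, u j x) ≤ v x := by
  have key : ∀ j x, u j x ≤ v x := by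
    intro j
    induction j with
    | zero => intro x; rw [hu0]; exact hvlow x
    | succ j ih =>
      intro x
      rw [huj]
      refine le_trans ?_ (hvsuper x)
      refine add_le_add (add_le_add (lintegral_mono fun y => ?_) le_rfl) le_rfl
      exact mul_le_mul_right (ENNReal.rpow_le_rpow (ih y) hq0.le) _
  exact ⟨key, fun x => iSup_le fun j => key j x⟩
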